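/- The cycle C_n is not vertex decomposable (equivalently, has no codominated vertex) for n ≥ 6. -/

import Mathlib

open SimpleGraph

variable {V : Type*}

/-- The closed neighborhood `N_G[x]` of a vertex. -/
def closedNbhd (G : SimpleGraph V) (x : V) : Set V := insert x (G.neighborSet x)

/-- `x` is codominated: some `y ≠ x` has `N_G[y] ⊆ N_G[x]`. -/
def Codominated (G : SimpleGraph V) (x : V) : Prop :=
  ∃ y, y ≠ x ∧ closedNbhd G y ⊆ closedNbhd G x

/-- `S` is an independent set of `G`. -/
def IsIndep (G : SimpleGraph V) (S : Set V) : Prop :=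
  ∀ ⦃u⦄, u ∈ S → ∀ ⦃v⦄, v ∈ S → ¬ G.Adj u v

/-- `x` is a shedding vertex of `G`: every independent set of `G - N_G[x]`
extends by a neighbor of `x`. -/
def SheddingVertex (G : SimpleGraph V) (x : V) : Prop :=
  ∀ S : Set V, S ⊆ (closedNbhd G x)ᶜ → IsIndep G S →
    ∃ v ∈ G.neighborSet x, IsIndep G (insert v S)

/-- The closed neighborhood `N_G[I]` of a set of vertices. -/
def closedNbhdSet (G : SimpleGraph V) (I : Set V) : Set V :=
  I ∪ {v | ∃ u ∈ I, G.Adj u v}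

/-- `x` is codominated in the subgraph of `G` induced on `A`. -/
def CodominatedOn (G : SimpleGraph V) (A : Finset V) (x : V) : Prop :=
  ∃ y ∈ A, y ≠ x ∧ ∀ z ∈ A, (z = y ∨ G.Adj y z) → (z = x ∨ G.Adj x z)

/-- The subgraph of `G` induced on `A` is codismantlable. -/
def CodismantlableOn (G : SimpleGraph V) [DecidableEq V] (A : Finset V) : Prop :=
  (∀ x ∈ A, ∀ y ∈ A, ¬ G.Adj x y) ∨
    ∃ x, ∃ h : x ∈ A, CodominatedOn G A x ∧ CodismantlableOn G (A.erase x)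
termination_by A.card
decreasing_by exact Finset.card_erase_lt_of_mem h

/-- `G` is codismantlable. -/
def Codismantlable (G : SimpleGraph V) [Fintype V] [DecidableEq V] : Prop :=
  CodismantlableOn G Finset.univ

/-- A maximal independent set of `G`. -/
def MaxIndep (G : SimpleGraph V) (S : Set V) : Prop :=
  IsIndep G S ∧ ∀ T : Set V, IsIndep G T → S ⊆ T → S = T

/-- `G` is well-covered: all maximal independent sets have the same size. -/
def WellCovered (G : SimpleGraph V) : Prop :=
  ∀ S T : Set V, MaxIndep G S → MaxIndep G T → S.ncard = T.ncard

/-- `G` has no induced cycle of length `n`. -/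
def CycleFree (G : SimpleGraph V) (n : ℕ) : Prop :=
  IsEmpty (cycleGraph n ↪g G)

/-- `G` is chordal: no induced cycle of length at least 4. -/
def Chordal (G : SimpleGraph V) : Prop :=
  ∀ n, 4 ≤ n → CycleFree G n

/-- `M` is a matching of `G` (as a set of edges). -/
def IsMatchingSet (G : SimpleGraph V) (M : Finset (Sym2 V)) : Prop :=
  (∀ e ∈ M, e ∈ G.edgeSet) ∧
    ∀ e ∈ M, ∀ f ∈ M, e ≠ f → ∀ v : V, v ∈ e → v ∉ f

/-- `M` is an induced matching of `G`. -/
def IsInducedMatching (G : SimpleGraph V) (M : Finset (Sym2 V)) : Prop :=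
  IsMatchingSet G M ∧
    ∀ e ∈ M, ∀ f ∈ M, e ≠ f → ∀ u : V, u ∈ e → ∀ v : V, v ∈ f → ¬ G.Adj u v

/-- The matching number `m(G)`. -/
noncomputable def matchNum (G : SimpleGraph V) : ℕ :=
  sSup {n | ∃ M : Finset (Sym2 V), IsMatchingSet G M ∧ M.card = n}

/-- The induced matching number `im(G)`. -/
noncomputable def indMatchNum (G : SimpleGraph V) : ℕ :=
  sSup {n | ∃ M : Finset (Sym2 V), IsInducedMatching G M ∧ M.card = n}

open Classical in
/-- The vertices of `A` outside the closed neighborhood of `x`. -/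
noncomputable def delNbhd (G : SimpleGraph V) [DecidableEq V] (A : Finset V) (x : V) : Finset V :=
  A.filter (fun z => ¬(z = x ∨ G.Adj x z))

/-- `x` is a shedding vertex of the subgraph of `G` induced on `A`. -/
def SheddingOn (G : SimpleGraph V) (A : Finset V) (x : V) : Prop :=
  ∀ S : Set V, S ⊆ ↑A → (∀ u ∈ S, ¬(u = x ∨ G.Adj x u)) → IsIndep G S →
    ∃ v ∈ A, G.Adj x v ∧ IsIndep G (insert v S)

lemma delNbhd_ssubset (G : SimpleGraph V) [DecidableEq V] {A : Finset V} {x : V}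
    (h : x ∈ A) : delNbhd G A x ⊂ A := by
  classical
  refine (Finset.ssubset_iff_of_subset (Finset.filter_subset _ _)).mpr ⟨x, h, ?_⟩
  simp [delNbhd]

/-- The subgraph of `G` induced on `A` is vertex decomposable. -/
noncomputable def VertexDecomposableOn (G : SimpleGraph V) [DecidableEq V] (A : Finset V) :
    Prop :=
  (∀ x ∈ A, ∀ y ∈ A, ¬ G.Adj x y) ∨
    ∃ x, ∃ h : x ∈ A, SheddingOn G A x ∧ VertexDecomposableOn G (A.erase x) ∧
      VertexDecomposableOn G (delNbhd G A x)
termination_by A.card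
decreasing_by
  · exact Finset.card_erase_lt_of_mem h
  · exact Finset.card_lt_card (delNbhd_ssubset G h)

/-- `G` is vertex decomposable. -/
noncomputable def VertexDecomposable (G : SimpleGraph V) [Fintype V] [DecidableEq V] : Prop :=
  VertexDecomposableOn G Finset.univ

/-- The restriction of `G` to `A` codismantles to its restriction to `B`. -/
inductive CodisTo (G : SimpleGraph V) [DecidableEq V] : Finset V → Finset V → Prop
  | refl (A : Finset V) : CodisTo G A A
  | step {A B : Finset V} {x : V} (h : x ∈ A) (hc : CodominatedOn G A x)
      (ht : CodisTo G (A.erase x) B) : CodisTo G A B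

/-- `L` is a codismantling sequence for the subgraph of `G` induced on `A`. -/
def CodisSeq (G : SimpleGraph V) [DecidableEq V] : Finset V → List V → Prop
  | A, [] => ∀ x ∈ A, ∀ y ∈ A, ¬ G.Adj x y
  | A, x :: xs => x ∈ A ∧ CodominatedOn G A x ∧ CodisSeq G (A.erase x) xs

/-- `C` is a vertex cover of `G`. -/
def IsVertexCover (G : SimpleGraph V) (C : Set V) : Prop :=
  ∀ ⦃u v : V⦄, G.Adj u v → u ∈ C ∨ v ∈ C

/-- The co-chordal cover number: the minimum number of co-chordal subgraphs of `G`
covering all edges of `G`. -/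
noncomputable def cochord (G : SimpleGraph V) : ℕ :=
  sInf {k | ∃ H : Fin k → G.Subgraph, (∀ i, Chordal ((H i).coeᶜ)) ∧
    ∀ e ∈ G.edgeSet, ∃ i, e ∈ (H i).edgeSet}

/-- The domination number of a graph. -/
noncomputable def domNum {W : Type*} (K : SimpleGraph W) : ℕ :=
  sInf {n | ∃ D : Finset W, (∀ v : W, v ∈ D ∨ ∃ u ∈ D, K.Adj u v) ∧ D.card = n}


open Fin.NatCast Fin.CommRing in
/-- for `n ≥ 6` the cycle `C_n` has no codominated vertex and is
not vertex decomposable. -/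
theorem cycleGraph_not_vertexDecomposable (n : ℕ) (hn : 6 ≤ n) :
    (∀ x : Fin n, ¬ Codominated (cycleGraph n) x) ∧
      ¬ VertexDecomposable (cycleGraph n) := by
  obtain ⟨m, rfl⟩ : ∃ m, n = m + 6 := ⟨n - 6, by omega⟩
  have key : ∀ c : ℕ, 0 < c → c < 6 → ((c : ℕ) : Fin (m + 6)) ≠ 0 := by
    intro c h1 h2 h
    have := Fin.ext_iff.mp h
    rw [Fin.val_natCast, Nat.mod_eq_of_lt (by omega)] at this
    simp at this; omega
  have adj_iff : ∀ x v : Fin (m + 6),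
      (cycleGraph (m + 6)).Adj x v ↔ v = x - 1 ∨ v = x + 1 := by
    intro x v
    rw [← SimpleGraph.mem_neighborSet, cycleGraph_neighborSet (n := m + 4)]
    simp
  have nocod : ∀ x : Fin (m + 6), ¬ Codominated (cycleGraph (m + 6)) x := by
    rintro x ⟨y, hyx, hsub⟩
    have hmem : ∀ z, z ∈ closedNbhd (cycleGraph (m + 6)) x →
        z = x ∨ z = x - 1 ∨ z = x + 1 := by
      intro z hz
      rw [closedNbhd, cycleGraph_neighborSet (n := m + 4)] at hz
      simpa using hz
    have hy : y = x - 1 ∨ y = x + 1 := by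
      rcases hmem y (hsub (Set.mem_insert y _)) with h | h
      · exact absurd h hyx
      · exact h
    have hy1 : ∀ w, w ∈ (cycleGraph (m + 6)).neighborSet y →
        w = x ∨ w = x - 1 ∨ w = x + 1 := fun w hw =>
      hmem w (hsub (Set.mem_insert_of_mem _ hw))
    rcases hy with rfl | rfl
    · have hw : (x - 1) - 1 ∈ (cycleGraph (m + 6)).neighborSet (x - 1) := by
        rw [cycleGraph_neighborSet (n := m + 4)]; exact Set.mem_insert _ _
      rcases hy1 _ hw with h | h | h
      · exact key 2 (by norm_num) (by norm_num) (by linear_combination -h)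
      · exact key 1 (by norm_num) (by norm_num) (by linear_combination -h)
      · exact key 3 (by norm_num) (by norm_num) (by linear_combination -h)
    · have hw : (x + 1) + 1 ∈ (cycleGraph (m + 6)).neighborSet (x + 1) := by
        rw [cycleGraph_neighborSet (n := m + 4)]
        exact Set.mem_insert_of_mem _ rfl
      rcases hy1 _ hw with h | h | h
      · exact key 2 (by norm_num) (by norm_num) (by linear_combination h)
      · exact key 3 (by norm_num) (by norm_num) (by linear_combination h)
      · exact key 1 (by norm_num) (by norm_num) (by linear_combination h)
  refine ⟨nocod, ?_⟩
  intro hvd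
  rw [VertexDecomposable, VertexDecomposableOn] at hvd
  rcases hvd with hE | ⟨x, -, hshed, -, -⟩
  · exact hE 0 (Finset.mem_univ _) 1 (Finset.mem_univ _)
      ((adj_iff 0 1).mpr (Or.inr (by ring)))
  · have hS1 : ∀ u ∈ ({x + 2, x - 2} : Set (Fin (m + 6))),
        ¬(u = x ∨ (cycleGraph (m + 6)).Adj x u) := by
      intro u hu hc
      simp only [Set.mem_insert_iff, Set.mem_singleton_iff] at hu
      rcases hu with rfl | rfl
      · rcases hc with h | h
        · exact key 2 (by norm_num) (by norm_num) (by linear_combination h)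
        · rcases (adj_iff _ _).mp h with h | h
          · exact key 3 (by norm_num) (by norm_num) (by linear_combination h)
          · exact key 1 (by norm_num) (by norm_num) (by linear_combination h)
      · rcases hc with h | h
        · exact key 2 (by norm_num) (by norm_num) (by linear_combination -h)
        · rcases (adj_iff _ _).mp h with h | h
          · exact key 1 (by norm_num) (by norm_num) (by linear_combination -h)
          · exact key 3 (by norm_num) (by norm_num) (by linear_combination -h)
    have hS2 : IsIndep (cycleGraph (m + 6)) ({x + 2, x - 2} : Set (Fin (m + 6))) := by
      intro u hu w hw hadj'
      simp only [Set.mem_insert_iff, Set.mem_singleton_iff] at hu hw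
      rcases hu with rfl | rfl <;> rcases hw with rfl | rfl
      · exact (cycleGraph (m + 6)).loopless.irrefl _ hadj'
      · rcases (adj_iff _ _).mp hadj' with h | h
        · exact key 3 (by norm_num) (by norm_num) (by linear_combination -h)
        · exact key 5 (by norm_num) (by norm_num) (by linear_combination -h)
      · rcases (adj_iff _ _).mp hadj' with h | h
        · exact key 5 (by norm_num) (by norm_num) (by linear_combination h)
        · exact key 3 (by norm_num) (by norm_num) (by linear_combination h)
      · exact (cycleGraph (m + 6)).loopless.irrefl _ hadj'
    obtain ⟨v, -, hadj, hind⟩ := hshed {x + 2, x - 2} (by simp) hS1 hS2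
    rcases (adj_iff x v).mp hadj with rfl | rfl
    · exact hind (Set.mem_insert _ _)
        (Set.mem_insert_of_mem _ (by right; rfl))
        ((adj_iff _ _).mpr (Or.inl (by ring)))
    · exact hind (Set.mem_insert _ _)
        (Set.mem_insert_of_mem _ (by left; rfl))
        ((adj_iff _ _).mpr (Or.inr (by ring)))
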